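/- arXiv:1608.05506 — 2 statements merged into one kernel-verified Lean document; each statement's English description precedes it below -/
import Mathlib

section
/- Let μ₁ > μ₂ > … > μ_{p₁} > 0 be distinct positive reals with multiplicities m₁,…,m_{p₁} ≥ 1, and let M be the block-diagonal matrix with diagonal blocks μ₁·J_{2m₁},…,μ_{p₁}·J_{2m_{p₁}} (indexed by the sigma type Σ j, Fin (2mⱼ)). If k is an orthogonal matrix of this size commuting with M, then k is block diagonal with respect to this decomposition: every entry of k joining indices from distinct blocks j ≠ j' is zero, the j-th diagonal block [k]ⱼ is an orthogonal 2mⱼ×2mⱼ matrix commuting with J_{2mⱼ}, and consequently det k = 1. -/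
open Matrix

/-- Entries of the standard symplectic-type matrix built from `2×2` blocks
`J = [[0,1],[−1,0]]`, as a function of natural-number indices. -/
def Jent (a b : ℕ) : ℝ :=
  if a / 2 = b / 2 then
    if a % 2 = 0 ∧ b % 2 = 1 then 1
    else if a % 2 = 1 ∧ b % 2 = 0 then -1
    else 0
  else 0

/-- `J_{2m}`, the `2m×2m` block-diagonal matrix with `m` diagonal blocks equal to `J`. -/
def J2m (m : ℕ) : Matrix (Fin (2 * m)) (Fin (2 * m)) ℝ :=
  Matrix.of fun a b => Jent a b

def pEquiv (n : ℕ) : Fin (2 * n) ≃ Fin n ⊕ Fin n where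
  toFun a := if (a : ℕ) % 2 = 0 then Sum.inl ⟨(a : ℕ) / 2, by omega⟩
             else Sum.inr ⟨(a : ℕ) / 2, by omega⟩
  invFun x := Sum.elim (fun r : Fin n => (⟨2 * r, by omega⟩ : Fin (2 * n)))
    (fun r : Fin n => ⟨2 * r + 1, by omega⟩) x
  left_inv a := by
    by_cases h : (a : ℕ) % 2 = 0 <;> simp [h] <;> ext <;> simp <;> omega
  right_inv x := by
    rcases x with r | r <;>
      simp only [Sum.elim_inl, Sum.elim_inr] <;>
      first
        | (split_ifs <;> simp_all [Fin.ext_iff] <;> omega)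

theorem reindex_J2m (n : ℕ) :
    reindex (pEquiv n) (pEquiv n) (J2m n) =
      fromBlocks (0 : Matrix (Fin n) (Fin n) ℝ) 1 (-1) 0 := by
  ext x y
  rcases x with r | r <;> rcases y with s | s <;>
    have hr := r.isLt <;> have hs := s.isLt <;>
    by_cases h : (r : ℕ) = (s : ℕ) <;>
    simp only [reindex_apply, submatrix_apply, pEquiv, Equiv.coe_fn_symm_mk, Sum.elim_inl,
      Sum.elim_inr, J2m, Jent, of_apply, fromBlocks_apply₁₁, fromBlocks_apply₁₂,
      fromBlocks_apply₂₁, fromBlocks_apply₂₂, one_apply, Matrix.zero_apply, Matrix.neg_apply,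
      Fin.ext_iff, h] <;>
    split_ifs <;> first | rfl | omega | simp_all | norm_num

theorem J2m_sq (n : ℕ) : J2m n * J2m n = -1 := by
  apply (reindexAlgEquiv ℝ ℝ (pEquiv n)).injective
  have h : reindexAlgEquiv ℝ ℝ (pEquiv n) (J2m n) =
      fromBlocks (0 : Matrix (Fin n) (Fin n) ℝ) 1 (-1) 0 := reindex_J2m n
  rw [_root_.map_mul, h, _root_.map_neg, _root_.map_one, fromBlocks_multiply]
  simp only [Matrix.mul_neg, Matrix.mul_one, Matrix.zero_mul, Matrix.mul_zero, zero_add,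
    add_zero, Matrix.neg_mul, Matrix.one_mul, neg_zero]
  rw [show (0 : Matrix (Fin n) (Fin n) ℝ) = -0 from neg_zero.symm, ← fromBlocks_neg, fromBlocks_one]


private lemma mulSmulOne {n : ℕ} (M : Matrix (Fin n) (Fin n) ℂ) (b : ℂ) :
    M * (b • (1 : Matrix (Fin n) (Fin n) ℂ)) = b • M := by
  rw [Matrix.mul_smul, Matrix.mul_one]

private lemma smulOneMul {n : ℕ} (M : Matrix (Fin n) (Fin n) ℂ) (b : ℂ) :
    (b • (1 : Matrix (Fin n) (Fin n) ℂ)) * M = b • M := by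
  rw [Matrix.smul_mul, Matrix.one_mul]

theorem det_orth_comm_J2m {n : ℕ} (K : Matrix (Fin (2 * n)) (Fin (2 * n)) ℝ)
    (h1 : Kᵀ * K = 1) (h2 : K * J2m n = J2m n * K) : K.det = 1 := by
  classical
  set e := pEquiv n
  set R0 : Matrix (Fin n ⊕ Fin n) (Fin n ⊕ Fin n) ℝ := reindex e e K with hR0
  -- transport the commutation relation
  have h2' : R0 * fromBlocks 0 1 (-1) 0 = fromBlocks 0 1 (-1) 0 * R0 := by
    have := congrArg (reindexAlgEquiv ℝ ℝ e) h2
    rw [_root_.map_mul, _root_.map_mul] at this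
    have hJ : reindexAlgEquiv ℝ ℝ e (J2m n) = fromBlocks 0 1 (-1) 0 := reindex_J2m n
    rw [hJ] at this
    exact this
  set A := R0.toBlocks₁₁ with hA
  set B := R0.toBlocks₁₂ with hB
  have hRB : R0 = fromBlocks A B (-B) A := by
    have h0 : R0 = fromBlocks A B R0.toBlocks₂₁ R0.toBlocks₂₂ := (fromBlocks_toBlocks R0).symm
    rw [h0, fromBlocks_multiply, fromBlocks_multiply] at h2'
    have h11 := congrArg Matrix.toBlocks₁₁ h2'
    have h12 := congrArg Matrix.toBlocks₁₂ h2'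
    simp only [toBlocks_fromBlocks₁₁, toBlocks_fromBlocks₁₂, Matrix.mul_zero, Matrix.mul_one,
      Matrix.mul_neg, Matrix.zero_mul, Matrix.one_mul, Matrix.neg_mul, zero_add, add_zero,
      neg_neg] at h11 h12
    -- h11 : -B = R0.toBlocks₂₁ (or similar), h12 : A = R0.toBlocks₂₂
    rw [h0, ← h11, ← h12]
  -- complexify
  set f := Complex.ofRealHom with hf
  set Ac := A.map f with hAc
  set Bc := B.map f with hBc
  set Z := Ac + Complex.I • Bc with hZ
  set W := Ac - Complex.I • Bc with hW
  have hRc : R0.map f = fromBlocks Ac Bc (-Bc) Ac := by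
    have hneg : (-B).map ⇑f = -(B.map ⇑f) := by ext i j; simp
    rw [hRB, fromBlocks_map, hneg]
  set T : Matrix (Fin n ⊕ Fin n) (Fin n ⊕ Fin n) ℂ :=
    fromBlocks ((1 : ℂ) • 1) ((1 : ℂ) • 1) (Complex.I • 1) ((-Complex.I) • 1) with hT
  set S : Matrix (Fin n ⊕ Fin n) (Fin n ⊕ Fin n) ℂ :=
    fromBlocks (((2 : ℂ)⁻¹) • 1) ((-(Complex.I) / 2) • 1)
      (((2 : ℂ)⁻¹) • 1) ((Complex.I / 2) • 1) with hS
  have hI := Complex.I_mul_I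
  have hTS : T * S = 1 := by
    rw [hT, hS, fromBlocks_multiply, ← fromBlocks_one]
    simp only [mulSmulOne, smulOneMul, smul_smul, ← add_smul]
    rw [show ((2:ℂ)⁻¹ * 1 + 2⁻¹ * 1) = 1 by norm_num,
      show (-Complex.I/2 * 1 + Complex.I/2 * 1 : ℂ) = 0 by ring,
      show ((2:ℂ)⁻¹ * Complex.I + 2⁻¹ * -Complex.I) = 0 by ring,
      show (-Complex.I/2 * Complex.I + Complex.I/2 * -Complex.I : ℂ) = 1 by
        linear_combination -Complex.I_mul_I]
    simp only [one_smul, zero_smul]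
  have hST : S * T = 1 := by
    rw [hT, hS, fromBlocks_multiply, ← fromBlocks_one]
    simp only [mulSmulOne, smulOneMul, smul_smul, ← add_smul]
    rw [show ((1:ℂ) * 2⁻¹ + Complex.I * (-Complex.I/2)) = 1 by
        linear_combination (-(1:ℂ)/2) * Complex.I_mul_I,
      show ((1:ℂ) * 2⁻¹ + -Complex.I * (-Complex.I/2)) = 0 by
        linear_combination ((1:ℂ)/2) * Complex.I_mul_I,
      show ((1:ℂ) * 2⁻¹ + Complex.I * (Complex.I/2)) = 0 by
        linear_combination ((1:ℂ)/2) * Complex.I_mul_I,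
      show ((1:ℂ) * 2⁻¹ + -Complex.I * (Complex.I/2)) = 1 by
        linear_combination (-(1:ℂ)/2) * Complex.I_mul_I]
    simp only [one_smul, zero_smul]
  have hRT : R0.map ⇑f * T = T * fromBlocks Z 0 0 W := by
    rw [hRc, hT, fromBlocks_multiply, fromBlocks_multiply]
    simp only [mulSmulOne, smulOneMul, Matrix.mul_zero, Matrix.zero_mul, one_smul,
      Matrix.mul_one, Matrix.one_mul, add_zero, zero_add]
    rw [hZ, hW]
    rw [show Complex.I • (Ac + Complex.I • Bc) = Complex.I • Ac + (-1 : ℂ) • Bc by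
        rw [smul_add, smul_smul, hI],
      show (-Complex.I) • (Ac - Complex.I • Bc) = (-Complex.I) • Ac - (1 : ℂ) • Bc by
        rw [smul_sub, smul_smul,
          show (-Complex.I * Complex.I : ℂ) = 1 by linear_combination -Complex.I_mul_I]]
    rw [fromBlocks_inj]
    refine ⟨by module, by module, by module, by module⟩
  -- determinant identities
  have hdetRc : (R0.map ⇑f).det = Z.det * W.det := by
    have hfact : R0.map ⇑f = T * fromBlocks Z 0 0 W * S := by
      calc R0.map ⇑f = R0.map ⇑f * (T * S) := by rw [hTS, Matrix.mul_one]
      _ = (R0.map ⇑f * T) * S := by rw [Matrix.mul_assoc]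
      _ = T * fromBlocks Z 0 0 W * S := by rw [hRT]
    rw [hfact, Matrix.det_mul, Matrix.det_mul, det_fromBlocks_zero₂₁]
    have hts : T.det * S.det = 1 := by rw [← Matrix.det_mul, hTS, Matrix.det_one]
    calc T.det * (Z.det * W.det) * S.det = (Z.det * W.det) * (T.det * S.det) := by ring
    _ = Z.det * W.det := by rw [hts, mul_one]
  have hWconj : W = Z.map (starRingEnd ℂ) := by
    ext i j
    simp [hZ, hW, hAc, hBc, hf, Complex.ofRealHom_eq_coe, Complex.conj_ofReal,
      sub_eq_add_neg]
  have hdetW : W.det = (starRingEnd ℂ) Z.det := by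
    rw [hWconj, ← RingHom.mapMatrix_apply, ← RingHom.map_det]
  have h3 : Z.det * W.det = (K.map ⇑f).det := by
    rw [← hdetRc]
    have hre : R0.map ⇑f = reindex e e (K.map ⇑f) := rfl
    rw [hre, det_reindex_self]
  have h4 : (K.map ⇑f).det = ((K.det : ℝ) : ℂ) := by
    rw [← RingHom.mapMatrix_apply, ← RingHom.map_det]
    simp [hf]
  have hdetK : ((K.det : ℝ) : ℂ) = Z.det * (starRingEnd ℂ) Z.det := by
    rw [← h4, ← h3, hdetW]
  have hnonneg : 0 ≤ K.det := by
    rw [Complex.mul_conj'] at hdetK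
    have h5 : K.det = ‖Z.det‖ ^ 2 := by exact_mod_cast hdetK
    rw [h5]
    positivity
  have hsq : K.det * K.det = 1 := by
    have := congrArg Matrix.det h1
    rwa [Matrix.det_mul, Matrix.det_transpose, Matrix.det_one] at this
  rcases mul_self_eq_one_iff.mp hsq with h | h
  · exact h
  · exfalso; rw [h] at hnonneg; linarith

/-- The block-diagonal matrix with diagonal blocks `μ₁·J_{2m₁}, …, μ_{p₁}·J_{2m_{p₁}}`,
indexed by the sigma type `Σ j, Fin (2mⱼ)`. -/
def blockM {p₁ : ℕ} (m : Fin p₁ → ℕ) (μ : Fin p₁ → ℝ) :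
    Matrix ((j : Fin p₁) × Fin (2 * m j)) ((j : Fin p₁) × Fin (2 * m j)) ℝ :=
  Matrix.of fun x y => if x.1 = y.1 then μ x.1 * Jent x.2 y.2 else 0

/-- The `j`-th diagonal block `[k]ⱼ` of a matrix indexed by `Σ j, Fin (2mⱼ)`. -/
def diagBlock {p₁ : ℕ} {m : Fin p₁ → ℕ}
    (k : Matrix ((j : Fin p₁) × Fin (2 * m j)) ((j : Fin p₁) × Fin (2 * m j)) ℝ)
    (j : Fin p₁) : Matrix (Fin (2 * m j)) (Fin (2 * m j)) ℝ :=
  Matrix.of fun a b => k ⟨j, a⟩ ⟨j, b⟩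

def blockEquiv {p₁ : ℕ} (m : Fin p₁ → ℕ) (j : Fin p₁) :
    Fin (2 * m j) ≃ {x : (j' : Fin p₁) × Fin (2 * m j') // x.1 = j} where
  toFun a := ⟨⟨j, a⟩, rfl⟩
  invFun x := x.2 ▸ x.1.2
  left_inv a := rfl
  right_inv x := by rcases x with ⟨⟨j', a⟩, h⟩; subst h; rfl

/-- an orthogonal matrix commuting with the block-diagonal matrix `M` with
blocks `μⱼ·J_{2mⱼ}` (where `μ₁ > ⋯ > μ_{p₁} > 0` are distinct) is block diagonal;
each diagonal block `[k]ⱼ` is orthogonal and commutes with `J_{2mⱼ}`, and `det k = 1`. -/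
theorem orthogonal_commuting_blockM_structure
    {p₁ : ℕ} (m : Fin p₁ → ℕ) (μ : Fin p₁ → ℝ)
    (hm : ∀ j, 1 ≤ m j) (hμpos : ∀ j, 0 < μ j) (hμanti : StrictAnti μ)
    (k : Matrix ((j : Fin p₁) × Fin (2 * m j)) ((j : Fin p₁) × Fin (2 * m j)) ℝ)
    (hk : kᵀ * k = 1) (hcomm : k * blockM m μ = blockM m μ * k) :
    (∀ x y : (j : Fin p₁) × Fin (2 * m j), x.1 ≠ y.1 → k x y = 0) ∧
    (∀ j : Fin p₁, (diagBlock k j)ᵀ * diagBlock k j = 1 ∧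
      diagBlock k j * J2m (m j) = J2m (m j) * diagBlock k j) ∧
    k.det = 1 := by
  classical
  set M := blockM m μ with hM
  -- M * M = -(diagonal (μ²))
  have hMM : M * M = -(Matrix.diagonal fun x : (j : Fin p₁) × Fin (2 * m j) => μ x.1 ^ 2) := by
    ext x y
    rcases x with ⟨j, a⟩
    rcases y with ⟨j', b⟩
    rw [Matrix.mul_apply, ← Finset.univ_sigma_univ, Finset.sum_sigma]
    rw [Finset.sum_eq_single j]
    · by_cases hjj : j = j'
      · subst hjj
        have : ∀ c : Fin (2 * m j), M ⟨j, a⟩ ⟨j, c⟩ * M ⟨j, c⟩ ⟨j, b⟩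
            = μ j ^ 2 * (Jent (a : ℕ) (c : ℕ) * Jent (c : ℕ) (b : ℕ)) := by
          intro c
          simp only [hM, blockM, Matrix.of_apply, if_true, eq_self_iff_true]
          ring
        rw [Finset.sum_congr rfl fun c _ => this c, ← Finset.mul_sum]
        have hJ : ∑ c : Fin (2 * m j), Jent (a : ℕ) (c : ℕ) * Jent (c : ℕ) (b : ℕ)
            = (J2m (m j) * J2m (m j)) a b := by
          rw [Matrix.mul_apply]; rfl
        rw [hJ, J2m_sq]
        by_cases hab : a = b
        · subst hab
          simp [Matrix.one_apply]
        · have : (⟨j, a⟩ : (j' : Fin p₁) × Fin (2 * m j')) ≠ ⟨j, b⟩ := by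
            simp [Sigma.mk.inj_iff, hab]
          simp [Matrix.one_apply, hab, Matrix.diagonal_apply_ne _ this]
      · have : (⟨j, a⟩ : (j' : Fin p₁) × Fin (2 * m j')) ≠ ⟨j', b⟩ := by
          simp [Sigma.mk.inj_iff, hjj]
        simp only [Matrix.neg_apply, Matrix.diagonal_apply_ne _ this, neg_zero]
        apply Finset.sum_eq_zero
        intro c _
        simp [hM, blockM, hjj]
    · intro j'' _ hne
      apply Finset.sum_eq_zero
      intro c _
      simp [hM, blockM, Ne.symm hne]
    · simp
  -- k commutes with M * M
  have hc2 : k * (M * M) = (M * M) * k := by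
    rw [← Matrix.mul_assoc, hcomm, Matrix.mul_assoc, hcomm, ← Matrix.mul_assoc]
  have hoff : ∀ x y : (j : Fin p₁) × Fin (2 * m j), x.1 ≠ y.1 → k x y = 0 := by
    intro x y hxy
    have h := congrArg (fun N => N x y) hc2
    simp only [hMM, Matrix.mul_neg, Matrix.neg_mul, Matrix.neg_apply,
      Matrix.mul_diagonal, Matrix.diagonal_mul, neg_inj] at h
    have hne : μ x.1 ^ 2 ≠ μ y.1 ^ 2 := by
      have h1 : μ x.1 ≠ μ y.1 := fun hcon => hxy (hμanti.injective hcon)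
      rcases lt_or_gt_of_ne h1 with hlt | hlt <;> nlinarith [hμpos x.1, hμpos y.1]
    have h' : k x y * (μ y.1 ^ 2 - μ x.1 ^ 2) = 0 := by linear_combination h
    rcases mul_eq_zero.mp h' with h0 | h0
    · exact h0
    · exact absurd (by linarith : μ x.1 ^ 2 = μ y.1 ^ 2) hne
  -- per-block facts
  have hblocks : ∀ j : Fin p₁, (diagBlock k j)ᵀ * diagBlock k j = 1 ∧
      diagBlock k j * J2m (m j) = J2m (m j) * diagBlock k j := by
    intro j
    constructor
    · ext a b
      have h := congrArg (fun N => N ⟨j, a⟩ ⟨j, b⟩) hk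
      simp only [Matrix.mul_apply, Matrix.transpose_apply] at h ⊢
      rw [← Finset.univ_sigma_univ, Finset.sum_sigma] at h
      rw [Finset.sum_eq_single j] at h
      · have hl : ∑ c : Fin (2 * m j), k ⟨j, c⟩ ⟨j, a⟩ * k ⟨j, c⟩ ⟨j, b⟩
            = ∑ c : Fin (2 * m j), diagBlock k j c a * diagBlock k j c b := rfl
        rw [hl] at h
        rw [h]
        by_cases hab : a = b
        · subst hab; simp [Matrix.one_apply]
        · have hne : (⟨j, a⟩ : (j' : Fin p₁) × Fin (2 * m j')) ≠ ⟨j, b⟩ := by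
            simp [Sigma.mk.inj_iff, hab]
          simp [Matrix.one_apply, hab, hne]
      · intro j'' _ hne
        apply Finset.sum_eq_zero
        intro c _
        rw [hoff ⟨j'', c⟩ ⟨j, a⟩ hne, zero_mul]
      · simp
    · ext a b
      have h := congrArg (fun N => N ⟨j, a⟩ ⟨j, b⟩) hcomm
      simp only [Matrix.mul_apply] at h
      rw [← Finset.univ_sigma_univ, Finset.sum_sigma, Finset.sum_sigma] at h
      rw [Finset.sum_eq_single j, Finset.sum_eq_single j] at h
      · have hl : ∑ c : Fin (2 * m j), k ⟨j, a⟩ ⟨j, c⟩ * M ⟨j, c⟩ ⟨j, b⟩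
            = μ j * ∑ c : Fin (2 * m j), diagBlock k j a c * J2m (m j) c b := by
          rw [Finset.mul_sum]
          apply Finset.sum_congr rfl
          intro c _
          simp only [hM, blockM, Matrix.of_apply, if_true, eq_self_iff_true, diagBlock, J2m]
          ring
        have hr : ∑ c : Fin (2 * m j), M ⟨j, a⟩ ⟨j, c⟩ * k ⟨j, c⟩ ⟨j, b⟩
            = μ j * ∑ c : Fin (2 * m j), J2m (m j) a c * diagBlock k j c b := by
          rw [Finset.mul_sum]
          apply Finset.sum_congr rfl
          intro c _
          simp only [hM, blockM, Matrix.of_apply, if_true, eq_self_iff_true, diagBlock, J2m]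
          ring
        rw [hl, hr] at h
        have := mul_left_cancel₀ (ne_of_gt (hμpos j)) h
        rw [Matrix.mul_apply, Matrix.mul_apply]
        exact this
      · intro j'' _ hne
        apply Finset.sum_eq_zero
        intro c _
        simp [hM, blockM, hne, Ne.symm hne]
      · simp
      · intro j'' _ hne
        apply Finset.sum_eq_zero
        intro c _
        simp [hM, blockM, hne, Ne.symm hne]
      · simp
  refine ⟨hoff, hblocks, ?_⟩
  -- determinant
  have hbt : k.BlockTriangular Sigma.fst := by
    intro x y h
    exact hoff x y (ne_of_gt h)
  rw [hbt.det_fintype]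
  have hdet1 : ∀ j : Fin p₁, (k.toSquareBlock Sigma.fst j).det = 1 := by
    intro j
    have hre : k.toSquareBlock Sigma.fst j
        = reindex (blockEquiv m j) (blockEquiv m j) (diagBlock k j) := by
      ext x y
      rcases x with ⟨⟨jx, a⟩, hx⟩
      rcases y with ⟨⟨jy, c⟩, hy⟩
      have ex : jx = j := hx
      have ey : jy = j := hy
      subst ex; subst ey
      rfl
    rw [hre, det_reindex_self]
    exact det_orth_comm_J2m _ (hblocks j).1 (hblocks j).2
  rw [Finset.prod_congr rfl fun j _ => hdet1 j, Finset.prod_const_one]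
end

section
/- Fix p ≥ 1 and a unit vector v₀ ∈ ℝ^p. For r ∈ ℝ let φ_r : ℝ^p → ℂ be φ_r(X) = ∫_{O(p)} exp(i·r·⟪v₀, k·X⟫) dk. Let (r_N) be a sequence of nonnegative reals and r ≥ 0. Then φ_{r_N} converges to φ_r uniformly on every compact subset of ℝ^p if and only if r_N → r. (This is Theorem 4.2: a sequence of 'type 2' bounded O(p)-spherical functions on the free two-step nilpotent group converges in the topology of Δ(O(p),F(p)), i.e. uniformly on compact sets, to a 'type 2' bounded O(p)-spherical function exactly when the parameters converge.) -/
open Matrix MeasureTheory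

/-- Borel measurable structure on the orthogonal group `O(p)`. -/
noncomputable instance (p : ℕ) : MeasurableSpace (Matrix.orthogonalGroup (Fin p) ℝ) :=
  borel _

namespace T42Aux

open Complex Filter

instance (p : ℕ) : SecondCountableTopology (Matrix (Fin p) (Fin p) ℝ) :=
  inferInstanceAs (SecondCountableTopology (Fin p → Fin p → ℝ))

instance (p : ℕ) : SecondCountableTopology (Matrix.orthogonalGroup (Fin p) ℝ) :=
  Topology.IsEmbedding.subtypeVal.secondCountableTopology

instance (p : ℕ) : BorelSpace (Matrix.orthogonalGroup (Fin p) ℝ) := ⟨rfl⟩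

lemma norm_exp_I_sub_one_le (s : ℝ) : ‖Complex.exp (s * Complex.I) - 1‖ ≤ |s| := by
  have h1 : ‖Complex.exp (s * Complex.I) - 1‖ ^ 2 = 2 - 2 * Real.cos s := by
    rw [Complex.sq_norm, Complex.normSq_apply]
    simp only [Complex.sub_re, Complex.sub_im, Complex.one_re, Complex.one_im,
      Complex.exp_ofReal_mul_I_re, Complex.exp_ofReal_mul_I_im]
    nlinarith [Real.sin_sq_add_cos_sq s]
  have h2 : Real.cos s = 1 - 2 * Real.sin (s/2) ^ 2 := by
    have h := Real.cos_two_mul' (s/2)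
    have h3 := Real.sin_sq_add_cos_sq (s/2)
    rw [show 2 * (s/2) = s by ring] at h
    nlinarith
  have h4 := Real.sin_sq_le_sq (x := s/2)
  have h5 : ‖Complex.exp (s * Complex.I) - 1‖ ^ 2 ≤ |s| ^ 2 := by
    rw [h1, h2, _root_.sq_abs]; nlinarith
  have hn : (0:ℝ) ≤ ‖Complex.exp (s * Complex.I) - 1‖ := norm_nonneg _
  nlinarith [abs_nonneg s]

lemma norm_exp_I_mul (a w : ℝ) : ‖Complex.exp (Complex.I * a * w)‖ = 1 := by
  have : (Complex.I * a * w) = ((a * w : ℝ) : ℂ) * Complex.I := by push_cast; ring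
  rw [this, Complex.norm_exp_ofReal_mul_I]

lemma norm_exp_I_mul_sub (a b w : ℝ) :
    ‖Complex.exp (Complex.I * a * w) - Complex.exp (Complex.I * b * w)‖ ≤ |a - b| * |w| := by
  have key : Complex.exp (Complex.I * a * w) - Complex.exp (Complex.I * b * w)
      = Complex.exp (Complex.I * b * w) * (Complex.exp ((((a - b) * w : ℝ) : ℂ) * Complex.I) - 1) := by
    rw [mul_sub, mul_one, ← Complex.exp_add]
    congr 1
    push_cast; ring
  rw [key, norm_mul, norm_exp_I_mul, one_mul, ← abs_mul]
  exact norm_exp_I_sub_one_le _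

section O
variable {p : ℕ}

local notation "G" => Matrix.orthogonalGroup (Fin p) ℝ

lemma mulVec_dot (k : G) (X : Fin p → ℝ) :
    ((k : Matrix (Fin p) (Fin p) ℝ) *ᵥ X) ⬝ᵥ ((k : Matrix (Fin p) (Fin p) ℝ) *ᵥ X) = X ⬝ᵥ X := by
  have hk : (star (k : Matrix (Fin p) (Fin p) ℝ)) * (k : Matrix (Fin p) (Fin p) ℝ) = 1 :=
    Matrix.UnitaryGroup.star_mul_self k
  have hk' : ((k : Matrix (Fin p) (Fin p) ℝ))ᵀ * (k : Matrix (Fin p) (Fin p) ℝ) = 1 := by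
    simpa [Matrix.star_eq_conjTranspose] using hk
  rw [Matrix.dotProduct_mulVec, ← Matrix.vecMul_transpose, Matrix.vecMul_vecMul, hk',
    Matrix.vecMul_one]

lemma dot_le (v₀ : Fin p → ℝ) (hv₀ : v₀ ⬝ᵥ v₀ = 1) (k : G) (X : Fin p → ℝ) :
    |v₀ ⬝ᵥ (k : Matrix (Fin p) (Fin p) ℝ) *ᵥ X| ≤ Real.sqrt (X ⬝ᵥ X) := by
  set w := (k : Matrix (Fin p) (Fin p) ℝ) *ᵥ X with hw
  have h := Finset.sum_mul_sq_le_sq_mul_sq Finset.univ v₀ w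
  have h2 : (v₀ ⬝ᵥ w) ^ 2 ≤ X ⬝ᵥ X := by
    have hww : w ⬝ᵥ w = X ⬝ᵥ X := mulVec_dot k X
    simp only [dotProduct] at *
    calc (∑ i, v₀ i * w i)^2 ≤ (∑ i, v₀ i ^2) * ∑ i, w i^2 := h
    _ = ∑ i, w i * w i := by
        rw [show ∑ i, v₀ i ^2 = 1 by rw [← hv₀]; congr 1; ext i; ring]
        simp [sq]
    _ = ∑ i, X i * X i := hww
  calc |v₀ ⬝ᵥ w| = Real.sqrt ((v₀ ⬝ᵥ w)^2) := (Real.sqrt_sq_eq_abs _).symm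
  _ ≤ Real.sqrt (X ⬝ᵥ X) := Real.sqrt_le_sqrt h2

lemma Y_le_one (v₀ : Fin p → ℝ) (hv₀ : v₀ ⬝ᵥ v₀ = 1) (k : G) :
    |v₀ ⬝ᵥ (k : Matrix (Fin p) (Fin p) ℝ) *ᵥ v₀| ≤ 1 := by
  simpa [hv₀] using dot_le v₀ hv₀ k v₀

lemma cont_dot (v₀ X : Fin p → ℝ) :
    Continuous fun k : G => v₀ ⬝ᵥ (k : Matrix (Fin p) (Fin p) ℝ) *ᵥ X := by
  simp only [dotProduct, Matrix.mulVec]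
  refine continuous_finset_sum _ fun i _ => Continuous.mul continuous_const ?_
  refine continuous_finset_sum _ fun j _ => Continuous.mul ?_ continuous_const
  exact ((continuous_apply j).comp ((continuous_apply i).comp continuous_subtype_val))

end O


section M
variable {p : ℕ} (v₀ : Fin p → ℝ) (μK : Measure (Matrix.orthogonalGroup (Fin p) ℝ))

local notation "G" => Matrix.orthogonalGroup (Fin p) ℝ

/-- The spherical function. -/
noncomputable def phiF (a : ℝ) (X : Fin p → ℝ) : ℂ :=
  ∫ k : G, Complex.exp (Complex.I * (a : ℂ) *
    ((v₀ ⬝ᵥ (k : Matrix (Fin p) (Fin p) ℝ).mulVec X : ℝ) : ℂ)) ∂μK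

/-- The Gaussian average. -/
noncomputable def Gg (a : ℝ) : ℝ :=
  ∫ k : G, Real.exp (-(a * (v₀ ⬝ᵥ (k : Matrix (Fin p) (Fin p) ℝ).mulVec v₀)) ^ 2 / 2) ∂μK

variable [IsProbabilityMeasure μK]

lemma integrable_exp_dot (a : ℝ) (X : Fin p → ℝ) :
    Integrable (fun k : G => Complex.exp (Complex.I * (a : ℂ) *
      ((v₀ ⬝ᵥ (k : Matrix (Fin p) (Fin p) ℝ).mulVec X : ℝ) : ℂ))) μK := by
  constructor
  · exact (Complex.continuous_exp.comp
      (continuous_const.mul (Complex.continuous_ofReal.comp (cont_dot v₀ X)))).aestronglyMeasurable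
  · exact HasFiniteIntegral.of_bounded (C := 1)
      (Filter.Eventually.of_forall fun k => le_of_eq (norm_exp_I_mul a _))

lemma norm_phiF_le (a : ℝ) (X : Fin p → ℝ) : ‖phiF v₀ μK a X‖ ≤ 1 := by
  have := norm_integral_le_of_norm_le_const (μ := μK) (C := 1)
    (f := fun k : G => Complex.exp (Complex.I * (a : ℂ) *
      ((v₀ ⬝ᵥ (k : Matrix (Fin p) (Fin p) ℝ).mulVec X : ℝ) : ℂ)))
    (Filter.Eventually.of_forall fun k => le_of_eq (norm_exp_I_mul a _))
  simpa [phiF, measure_univ] using this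

lemma integrable_gauss (a : ℝ) :
    Integrable (fun k : G =>
      Real.exp (-(a * (v₀ ⬝ᵥ (k : Matrix (Fin p) (Fin p) ℝ).mulVec v₀)) ^ 2 / 2)) μK := by
  constructor
  · exact (Real.continuous_exp.comp
      (((continuous_const.mul (cont_dot v₀ v₀)).pow 2).neg.div_const 2)).aestronglyMeasurable
  · refine HasFiniteIntegral.of_bounded (C := 1) (Filter.Eventually.of_forall fun k => ?_)
    rw [Real.norm_eq_abs, abs_of_pos (Real.exp_pos _)]
    exact Real.exp_le_one_iff.mpr (by nlinarith [sq_nonneg (a * (v₀ ⬝ᵥ (k : Matrix (Fin p) (Fin p) ℝ).mulVec v₀))])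

end M


section H
variable {p : ℕ} (v₀ : Fin p → ℝ) (μK : Measure (Matrix.orthogonalGroup (Fin p) ℝ))
  [IsProbabilityMeasure μK]

local notation "G" => Matrix.orthogonalGroup (Fin p) ℝ

lemma phi_line (a t : ℝ) :
    phiF v₀ μK a (t • v₀) = ∫ k : G, Complex.exp (Complex.I * (a : ℂ) *
      (((t * (v₀ ⬝ᵥ (k : Matrix (Fin p) (Fin p) ℝ).mulVec v₀) : ℝ)) : ℂ)) ∂μK := by
  unfold phiF
  congr 1
  funext k
  rw [Matrix.mulVec_smul, dotProduct_smul, smul_eq_mul]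

lemma cintegral_ofReal {α : Type*} [MeasurableSpace α] (μ : Measure α) (f : α → ℝ) :
    ∫ x, ((f x : ℝ) : ℂ) ∂μ = ((∫ x, f x ∂μ : ℝ) : ℂ) :=
  integral_ofReal (𝕜 := ℂ)

set_option synthInstance.maxHeartbeats 1000000 in
lemma Hkey (a : ℝ) :
    ∫ t : ℝ, phiF v₀ μK a (t • v₀) * Complex.exp (-(1/2 : ℂ) * (t : ℂ) ^ 2)
      = ((Real.pi : ℂ) / (1/2)) ^ (1/2 : ℂ) * ((Gg v₀ μK a : ℝ) : ℂ) := by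
  set Y : G → ℝ := fun k => v₀ ⬝ᵥ (k : Matrix (Fin p) (Fin p) ℝ).mulVec v₀ with hY
  have hYcont : Continuous Y := cont_dot v₀ v₀
  set F : ℝ → G → ℂ := fun t k =>
    Complex.exp (Complex.I * ((a * Y k : ℝ) : ℂ) * (t : ℂ)) *
      Complex.exp (-(1/2 : ℂ) * (t : ℂ) ^ 2) with hF
  have hFcont : Continuous (Function.uncurry F) := by
    apply Continuous.mul
    · exact Complex.continuous_exp.comp
        ((continuous_const.mul ((Complex.continuous_ofReal.comp
          (continuous_const.mul (hYcont.comp continuous_snd))))).mul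
          (Complex.continuous_ofReal.comp continuous_fst))
    · exact Complex.continuous_exp.comp
        ((continuous_const.mul (((Complex.continuous_ofReal.comp continuous_fst)).pow 2)))
  have hnormF : ∀ t (k : G), ‖F t k‖ = Real.exp (-(1/2) * t ^ 2) := by
    intro t k
    rw [hF]
    simp only [norm_mul]
    rw [norm_exp_I_mul (a * Y k) t, one_mul]
    have h2 : (-(1/2 : ℂ) * (t : ℂ) ^ 2) = ((-(1/2) * t ^ 2 : ℝ) : ℂ) := by push_cast; ring
    rw [h2, Complex.norm_exp, Complex.ofReal_re]
  have hbound_int : Integrable (fun t : ℝ => Real.exp (-(1/2) * t ^ 2)) volume :=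
    integrable_exp_neg_mul_sq (by norm_num)
  haveI : SFinite μK := inferInstance
  have hFint : Integrable (Function.uncurry F) (volume.prod μK) := by
    rw [integrable_prod_iff hFcont.aestronglyMeasurable]
    constructor
    · refine Filter.Eventually.of_forall fun t => ?_
      constructor
      · exact (hFcont.comp (Continuous.prodMk_right t)).aestronglyMeasurable
      · exact HasFiniteIntegral.of_bounded (C := Real.exp (-(1/2) * t ^ 2))
          (Filter.Eventually.of_forall fun k => le_of_eq (hnormF t k))
    · have heq : (fun t : ℝ => ∫ k : G, ‖Function.uncurry F (t, k)‖ ∂μK)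
          = fun t => Real.exp (-(1/2) * t ^ 2) := by
        funext t
        simp only [Function.uncurry_apply_pair, hnormF t]
        simp [measure_univ]
      rw [heq]
      exact hbound_int
  have step1 : ∀ t : ℝ, phiF v₀ μK a (t • v₀) * Complex.exp (-(1/2 : ℂ) * (t : ℂ) ^ 2)
      = ∫ k : G, F t k ∂μK := by
    intro t
    rw [phi_line, ← integral_mul_const]
    congr 1
    funext k
    rw [hF]
    have h3 : (Complex.I * (a : ℂ) * ((t * Y k : ℝ) : ℂ))
        = Complex.I * ((a * Y k : ℝ) : ℂ) * (t : ℂ) := by push_cast; ring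
    rw [h3]
  calc ∫ t : ℝ, phiF v₀ μK a (t • v₀) * Complex.exp (-(1/2 : ℂ) * (t : ℂ) ^ 2)
      = ∫ t : ℝ, ∫ k : G, F t k ∂μK := by
        congr 1; funext t; exact step1 t
    _ = ∫ k : G, (∫ t : ℝ, F t k) ∂μK := integral_integral_swap hFint
    _ = ∫ k : G, ((Real.pi : ℂ) / (1/2)) ^ (1/2 : ℂ) *
          ((Real.exp (-(a * Y k) ^ 2 / 2) : ℝ) : ℂ) ∂μK := by
        congr 1; funext k
        have hfg := fourierIntegral_gaussian (b := (1/2 : ℂ))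
          (by norm_num : (0:ℝ) < (1/2 : ℂ).re) ((a * Y k : ℝ) : ℂ)
        rw [hF]
        simp only []
        rw [hfg]
        congr 1
        rw [Complex.ofReal_exp]
        congr 1
        push_cast
        ring
    _ = ((Real.pi : ℂ) / (1/2)) ^ (1/2 : ℂ) * ((Gg v₀ μK a : ℝ) : ℂ) := by
        rw [integral_const_mul, cintegral_ofReal]
        simp only [hY]
        rfl

end H


section T
variable {p : ℕ} (v₀ : Fin p → ℝ) (μK : Measure (Matrix.orthogonalGroup (Fin p) ℝ))
  [IsProbabilityMeasure μK]

local notation "G" => Matrix.orthogonalGroup (Fin p) ℝ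

lemma cont_phi_line (a : ℝ) : Continuous fun t : ℝ => phiF v₀ μK a (t • v₀) := by
  have heq : (fun t : ℝ => phiF v₀ μK a (t • v₀))
      = fun t => ∫ k : G, Complex.exp (Complex.I * (a : ℂ) *
        (((t * (v₀ ⬝ᵥ (k : Matrix (Fin p) (Fin p) ℝ).mulVec v₀) : ℝ)) : ℂ)) ∂μK :=
    funext fun t => phi_line v₀ μK a t
  rw [heq]
  apply continuous_of_dominated (bound := fun _ => (1 : ℝ))
  · intro t
    exact (Complex.continuous_exp.comp (continuous_const.mul
      (Complex.continuous_ofReal.comp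
        (continuous_const.mul (cont_dot v₀ v₀))))).aestronglyMeasurable
  · intro t
    exact Filter.Eventually.of_forall fun k => le_of_eq (norm_exp_I_mul a _)
  · exact integrable_const 1
  · refine Filter.Eventually.of_forall fun k => ?_
    exact Complex.continuous_exp.comp (continuous_const.mul
      (Complex.continuous_ofReal.comp (continuous_id.mul continuous_const)))

lemma Gg_tendsto (rseq : ℕ → ℝ) (r : ℝ)
    (hpt : ∀ t : ℝ, Filter.Tendsto (fun N => phiF v₀ μK (rseq N) (t • v₀)) Filter.atTop
      (nhds (phiF v₀ μK r (t • v₀)))) :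
    Filter.Tendsto (fun N => Gg v₀ μK (rseq N)) Filter.atTop (nhds (Gg v₀ μK r)) := by
  have hnorm2 : ∀ t : ℝ, ‖Complex.exp (-(1/2 : ℂ) * (t : ℂ) ^ 2)‖ = Real.exp (-(1/2) * t ^ 2) := by
    intro t
    have h2 : (-(1/2 : ℂ) * (t : ℂ) ^ 2) = ((-(1/2) * t ^ 2 : ℝ) : ℂ) := by push_cast; ring
    rw [h2, Complex.norm_exp, Complex.ofReal_re]
  have hH : Filter.Tendsto
      (fun N => ∫ t : ℝ, phiF v₀ μK (rseq N) (t • v₀) * Complex.exp (-(1/2 : ℂ) * (t : ℂ) ^ 2))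
      Filter.atTop
      (nhds (∫ t : ℝ, phiF v₀ μK r (t • v₀) * Complex.exp (-(1/2 : ℂ) * (t : ℂ) ^ 2))) := by
    apply tendsto_integral_of_dominated_convergence (bound := fun t => Real.exp (-(1/2) * t ^ 2))
    · intro N
      exact ((cont_phi_line v₀ μK (rseq N)).mul (Complex.continuous_exp.comp
        (continuous_const.mul (Complex.continuous_ofReal.pow 2)))).aestronglyMeasurable
    · exact integrable_exp_neg_mul_sq (by norm_num)
    · intro N
      refine Filter.Eventually.of_forall fun t => ?_
      rw [norm_mul, hnorm2 t]
      exact mul_le_of_le_one_left (Real.exp_pos _).le (norm_phiF_le v₀ μK _ _)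
    · refine Filter.Eventually.of_forall fun t => ?_
      exact (hpt t).mul_const _
  simp only [Hkey v₀ μK] at hH
  have hc0 : ((Real.pi : ℂ) / (1/2)) ^ (1/2 : ℂ) ≠ 0 := by
    intro hzero
    rw [Complex.cpow_eq_zero_iff] at hzero
    exact (div_ne_zero (Complex.ofReal_ne_zero.mpr Real.pi_ne_zero) (by norm_num)) hzero.1
  have h2 := hH.const_mul ((((Real.pi : ℂ) / (1/2)) ^ (1/2 : ℂ))⁻¹)
  simp only [← mul_assoc, inv_mul_cancel₀ hc0, one_mul] at h2
  have h3 := (Complex.continuous_re.tendsto _).comp h2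
  simpa [Function.comp_def] using h3

lemma Gg_strictAnti [μK.IsHaarMeasure] (hv₀ : v₀ ⬝ᵥ v₀ = 1) {a b : ℝ} (ha : 0 ≤ a) (hab : a < b) :
    Gg v₀ μK b < Gg v₀ μK a := by
  set Y : G → ℝ := fun k => v₀ ⬝ᵥ (k : Matrix (Fin p) (Fin p) ℝ).mulVec v₀ with hY
  have hYcont : Continuous Y := cont_dot v₀ v₀
  set U : Set G := {k | 1/2 < |Y k|} with hU
  have hUopen : IsOpen U := isOpen_lt continuous_const hYcont.abs
  have hU1 : (1 : G) ∈ U := by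
    have hco : ((1 : G) : Matrix (Fin p) (Fin p) ℝ) = 1 := rfl
    have : Y 1 = 1 := by rw [hY]; simp only [hco, Matrix.one_mulVec]; exact hv₀
    simp only [hU, Set.mem_setOf_eq, this]
    norm_num
  have hUpos : 0 < μK U := hUopen.measure_pos μK ⟨1, hU1⟩
  set f : G → ℝ := fun k => Real.exp (-(a * Y k) ^ 2 / 2) - Real.exp (-(b * Y k) ^ 2 / 2) with hf
  have hfnonneg : ∀ k, 0 ≤ f k := by
    intro k
    have hq : (0:ℝ) ≤ b ^ 2 - a ^ 2 := by nlinarith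
    have hq2 := mul_nonneg hq (sq_nonneg (Y k))
    have : Real.exp (-(b * Y k) ^ 2 / 2) ≤ Real.exp (-(a * Y k) ^ 2 / 2) :=
      Real.exp_le_exp.mpr (by nlinarith)
    simp only [hf]; linarith
  set δ : ℝ := Real.exp (-a ^ 2 / 2) * (1 - Real.exp ((a ^ 2 - b ^ 2) / 8)) with hδdef
  have hδ : 0 < δ := by
    apply mul_pos (Real.exp_pos _)
    have : Real.exp ((a ^ 2 - b ^ 2) / 8) < 1 := by
      rw [← Real.exp_zero]
      exact Real.exp_lt_exp.mpr (by nlinarith)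
    linarith
  have hδle : ∀ k ∈ U, δ ≤ f k := by
    intro k hk
    have hYle := Y_le_one v₀ hv₀ k
    have hY2a : Y k ^ 2 ≤ 1 := by nlinarith [_root_.sq_abs (Y k), abs_nonneg (Y k)]
    have hk' : 1/2 < |Y k| := hk
    have hY2b : 1/4 < Y k ^ 2 := by nlinarith [_root_.sq_abs (Y k), abs_nonneg (Y k)]
    have factor : f k = Real.exp (-(a * Y k) ^ 2 / 2) *
        (1 - Real.exp ((a ^ 2 - b ^ 2) * Y k ^ 2 / 2)) := by
      have hexp : -(a * Y k) ^ 2 / 2 + (a ^ 2 - b ^ 2) * Y k ^ 2 / 2 = -(b * Y k) ^ 2 / 2 := by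
        ring
      rw [hf]
      simp only [mul_sub, mul_one, ← Real.exp_add, hexp]
    rw [factor, hδdef]
    have hr1 : (0:ℝ) ≤ 1 - Y k ^ 2 := by linarith
    have hr2 := mul_nonneg (sq_nonneg a) hr1
    have hf1 : Real.exp (-a ^ 2 / 2) ≤ Real.exp (-(a * Y k) ^ 2 / 2) :=
      Real.exp_le_exp.mpr (by nlinarith)
    have hs1 : (0:ℝ) < b ^ 2 - a ^ 2 := by nlinarith
    have hs2 : (0:ℝ) < Y k ^ 2 - 1/4 := by linarith
    have hs3 := mul_pos hs1 hs2
    have hf2 : Real.exp ((a ^ 2 - b ^ 2) * Y k ^ 2 / 2) ≤ Real.exp ((a ^ 2 - b ^ 2) / 8) :=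
      Real.exp_le_exp.mpr (by nlinarith)
    have hf2' : (1 : ℝ) - Real.exp ((a ^ 2 - b ^ 2) / 8)
        ≤ 1 - Real.exp ((a ^ 2 - b ^ 2) * Y k ^ 2 / 2) := by linarith
    have hpos1 : (0:ℝ) ≤ 1 - Real.exp ((a ^ 2 - b ^ 2) / 8) := by
      have : Real.exp ((a ^ 2 - b ^ 2) / 8) < 1 := by
        rw [← Real.exp_zero]; exact Real.exp_lt_exp.mpr (by nlinarith)
      linarith
    exact mul_le_mul hf1 hf2' hpos1 (Real.exp_pos _).le
  have hint_a := integrable_gauss v₀ μK a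
  have hint_b := integrable_gauss v₀ μK b
  have hf_int : Integrable f μK := hint_a.sub hint_b
  have h1 : δ * (μK U).toReal ≤ ∫ k in U, f k ∂μK :=
    setIntegral_ge_of_const_le_real hUopen.measurableSet (measure_ne_top μK U) hδle
      hf_int.integrableOn
  have h2 : ∫ k in U, f k ∂μK ≤ ∫ k, f k ∂μK :=
    setIntegral_le_integral hf_int (Filter.Eventually.of_forall hfnonneg)
  have h3 : ∫ k, f k ∂μK = Gg v₀ μK a - Gg v₀ μK b := by
    rw [hf]
    rw [integral_sub hint_a hint_b]
    rfl
  have h4 : 0 < δ * (μK U).toReal :=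
    mul_pos hδ (ENNReal.toReal_pos hUpos.ne' (measure_ne_top μK U))
  linarith

lemma Gg_antitone [μK.IsHaarMeasure] (hv₀ : v₀ ⬝ᵥ v₀ = 1) {a b : ℝ} (ha : 0 ≤ a) (hab : a ≤ b) :
    Gg v₀ μK b ≤ Gg v₀ μK a := by
  rcases eq_or_lt_of_le hab with rfl | h
  · exact le_rfl
  · exact (Gg_strictAnti v₀ μK hv₀ ha h).le

end T

end T42Aux

/-- Theorem 4.2: for a sequence of nonnegative parameters `r_N` and `r ≥ 0`,
the 'type 2' bounded `O(p)`-spherical functions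
`φ_r(X) = ∫_{O(p)} exp(i·r·⟪v₀, k·X⟫) dk` satisfy: `φ_{r_N} → φ_r` uniformly on every
compact subset of `ℝ^p` if and only if `r_N → r`. -/
theorem type2_spherical_tendstoUniformlyOn_iff
    (p : ℕ) (hp : 1 ≤ p) (v₀ : Fin p → ℝ) (hv₀ : v₀ ⬝ᵥ v₀ = 1)
    (μK : Measure (Matrix.orthogonalGroup (Fin p) ℝ))
    [μK.IsHaarMeasure] [IsProbabilityMeasure μK]
    (rseq : ℕ → ℝ) (hrseq : ∀ N, 0 ≤ rseq N) (r : ℝ) (hr : 0 ≤ r) :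
    (∀ S : Set (Fin p → ℝ), IsCompact S →
        TendstoUniformlyOn
          (fun N X => ∫ k : Matrix.orthogonalGroup (Fin p) ℝ,
            Complex.exp (Complex.I * (rseq N : ℂ) *
              ((v₀ ⬝ᵥ (k : Matrix (Fin p) (Fin p) ℝ).mulVec X : ℝ) : ℂ)) ∂μK)
          (fun X => ∫ k : Matrix.orthogonalGroup (Fin p) ℝ,
            Complex.exp (Complex.I * (r : ℂ) *
              ((v₀ ⬝ᵥ (k : Matrix (Fin p) (Fin p) ℝ).mulVec X : ℝ) : ℂ)) ∂μK)
          Filter.atTop S) ↔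
      Filter.Tendsto rseq Filter.atTop (nhds r) := by
  constructor
  · -- hard direction: uniform convergence on compacts implies parameter convergence
    intro h
    have hpt : ∀ t : ℝ, Filter.Tendsto (fun N => T42Aux.phiF v₀ μK (rseq N) (t • v₀))
        Filter.atTop (nhds (T42Aux.phiF v₀ μK r (t • v₀))) := by
      intro t
      exact (h {t • v₀} isCompact_singleton).tendsto_at (Set.mem_singleton _)
    have hG := T42Aux.Gg_tendsto v₀ μK rseq r hpt
    refine Metric.tendsto_nhds.mpr fun ε hε => ?_
    have hub : ∀ᶠ N in Filter.atTop, rseq N < r + ε := by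
      have hlt : T42Aux.Gg v₀ μK (r + ε) < T42Aux.Gg v₀ μK r :=
        T42Aux.Gg_strictAnti v₀ μK hv₀ hr (by linarith)
      have hev := hG.eventually_const_lt hlt
      filter_upwards [hev] with N hN
      by_contra hc
      push_neg at hc
      exact absurd (T42Aux.Gg_antitone v₀ μK hv₀ (by linarith) hc) (not_le.mpr hN)
    have hlb : ∀ᶠ N in Filter.atTop, r - ε < rseq N := by
      rcases lt_or_ge r ε with hcase | hcase
      · exact Filter.Eventually.of_forall fun N => by have := hrseq N; linarith
      · have h0 : 0 ≤ r - ε := by linarith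
        have hlt : T42Aux.Gg v₀ μK r < T42Aux.Gg v₀ μK (r - ε) :=
          T42Aux.Gg_strictAnti v₀ μK hv₀ h0 (by linarith)
        have hev := hG.eventually_lt_const hlt
        filter_upwards [hev] with N hN
        by_contra hc
        push_neg at hc
        exact absurd (T42Aux.Gg_antitone v₀ μK hv₀ (hrseq N) hc) (not_le.mpr hN)
    filter_upwards [hub, hlb] with N h1 h2
    rw [Real.dist_eq, abs_sub_lt_iff]
    constructor <;> linarith
  · -- easy direction: parameter convergence implies locally uniform convergence
    intro htend S hS
    rcases S.eq_empty_or_nonempty with rfl | ⟨X₀, hX₀⟩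
    · exact tendstoUniformlyOn_empty
    rw [Metric.tendstoUniformlyOn_iff]
    intro ε hε
    have hgcont : Continuous fun X : Fin p → ℝ => Real.sqrt (X ⬝ᵥ X) := by
      apply Real.continuous_sqrt.comp
      simp only [dotProduct]
      exact continuous_finset_sum _ fun i _ => (continuous_apply i).mul (continuous_apply i)
    obtain ⟨Xm, hXm, hmax⟩ := hS.exists_isMaxOn ⟨X₀, hX₀⟩ hgcont.continuousOn
    set C := Real.sqrt (Xm ⬝ᵥ Xm) with hC
    have hC0 : 0 ≤ C := Real.sqrt_nonneg _
    have hC1 : (0:ℝ) < C + 1 := by linarith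
    have hconv : ∀ᶠ N in Filter.atTop, |rseq N - r| < ε / (C + 1) := by
      have := Metric.tendsto_nhds.mp htend (ε / (C + 1)) (by positivity)
      simpa [Real.dist_eq] using this
    filter_upwards [hconv] with N hN X hX
    rw [dist_eq_norm]
    have hint1 := T42Aux.integrable_exp_dot v₀ μK r X
    have hint2 := T42Aux.integrable_exp_dot v₀ μK (rseq N) X
    rw [← integral_sub hint1 hint2]
    have hbd : ∀ k : Matrix.orthogonalGroup (Fin p) ℝ,
        ‖Complex.exp (Complex.I * (r : ℂ) *
            ((v₀ ⬝ᵥ (k : Matrix (Fin p) (Fin p) ℝ).mulVec X : ℝ) : ℂ)) -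
          Complex.exp (Complex.I * (rseq N : ℂ) *
            ((v₀ ⬝ᵥ (k : Matrix (Fin p) (Fin p) ℝ).mulVec X : ℝ) : ℂ))‖
          ≤ |r - rseq N| * C := by
      intro k
      calc ‖_ - _‖ ≤ |r - rseq N| * |v₀ ⬝ᵥ (k : Matrix (Fin p) (Fin p) ℝ).mulVec X| :=
            T42Aux.norm_exp_I_mul_sub r (rseq N) _
        _ ≤ |r - rseq N| * C :=
            mul_le_mul_of_nonneg_left
              ((T42Aux.dot_le v₀ hv₀ k X).trans (hmax hX)) (abs_nonneg _)
    have hle := norm_integral_le_of_norm_le_const (μ := μK)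
      (Filter.Eventually.of_forall hbd)
    have hmeas1 : μK.real Set.univ = 1 := by simp [measure_univ]
    rw [hmeas1, mul_one] at hle
    have h5 : |r - rseq N| * (C + 1) < ε := by
      rw [abs_sub_comm]
      exact (lt_div_iff₀ hC1).mp hN
    calc ‖_‖ ≤ |r - rseq N| * C := hle
      _ < ε := by nlinarith [abs_nonneg (r - rseq N)]
end
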